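/- Let G be the group with presentation ⟨x, y, z ∣ x² = y², xz = zx, yz = zy⟩ and let G⁺ be the submonoid generated by {x, y, z}. Then the subgroup generated by {x, z} intersected with the subgroup generated by {y, z} equals the subgroup generated by {x², z}. -/
import Mathlib


namespace Garside

/-- The relations x² = y², xz = zx, yz = zy on generators x = 0, y = 1, z = 2. -/
def exampleRels : Set (FreeGroup (Fin 3)) :=
  { FreeGroup.of 0 * FreeGroup.of 0 * (FreeGroup.of 1 * FreeGroup.of 1)⁻¹,
    FreeGroup.of 0 * FreeGroup.of 2 * (FreeGroup.of 2 * FreeGroup.of 0)⁻¹,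
    FreeGroup.of 1 * FreeGroup.of 2 * (FreeGroup.of 2 * FreeGroup.of 1)⁻¹ }

abbrev G := PresentedGroup exampleRels

lemma rel_eq_one {r : FreeGroup (Fin 3)} (h : r ∈ exampleRels) :
    PresentedGroup.mk exampleRels r = 1 := by
  have : r ∈ Subgroup.normalClosure exampleRels := Subgroup.subset_normalClosure h
  exact (QuotientGroup.eq_one_iff r).2 this

lemma rel1 : (PresentedGroup.of 0 : G) * PresentedGroup.of 0 =
    PresentedGroup.of 1 * PresentedGroup.of 1 := by
  have := rel_eq_one (show _ ∈ exampleRels from Or.inl rfl)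
  simp only [map_mul, map_inv] at this
  exact mul_inv_eq_one.mp this

lemma rel2 : (PresentedGroup.of 0 : G) * PresentedGroup.of 2 =
    PresentedGroup.of 2 * PresentedGroup.of 0 := by
  have := rel_eq_one (show _ ∈ exampleRels from Or.inr (Or.inl rfl))
  simp only [map_mul, map_inv] at this
  exact mul_inv_eq_one.mp this

set_option maxHeartbeats 1000000 in
theorem example_intersection :
    Subgroup.closure ({PresentedGroup.of 0, PresentedGroup.of 2} :
        Set (PresentedGroup exampleRels)) ⊓
      Subgroup.closure {PresentedGroup.of 1, PresentedGroup.of 2} =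
    Subgroup.closure {PresentedGroup.of 0 ^ 2, PresentedGroup.of 2} := by
  set x : G := PresentedGroup.of 0
  set y : G := PresentedGroup.of 1
  set z : G := PresentedGroup.of 2
  have hc : Commute x z := rel2
  -- homomorphism to ZMod 2 killing y, z
  have hψ : ∀ r ∈ exampleRels, FreeGroup.lift
      (fun i : Fin 3 => if i = 0 then Multiplicative.ofAdd (1 : ZMod 2) else 1) r = 1 := by
    intro r hr
    rcases hr with h | h | h <;> subst h <;> simp <;> decide
  set ψ := PresentedGroup.toGroup hψ with hψdef
  -- elements of closure {x, z} have the form x^a * z^b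
  have hform : ∀ g ∈ Subgroup.closure ({x, z} : Set G), ∃ a b : ℤ, g = x ^ a * z ^ b := by
    intro g hg
    induction hg using Subgroup.closure_induction with
    | mem g hg =>
      simp only [Set.mem_insert_iff, Set.mem_singleton_iff] at hg
      rcases hg with rfl | rfl
      · exact ⟨1, 0, by simp⟩
      · exact ⟨0, 1, by simp⟩
    | one => exact ⟨0, 0, by simp⟩
    | mul g h _ _ hg hh =>
      obtain ⟨a, b, rfl⟩ := hg
      obtain ⟨c, d, rfl⟩ := hh
      refine ⟨a + c, b + d, ?_⟩
      have h1 : Commute (z ^ b) (x ^ c) := (hc.symm.zpow_zpow b c)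
      rw [zpow_add, zpow_add, mul_assoc, mul_assoc, ← mul_assoc (z^b), h1.eq, mul_assoc (x^c)]
    | inv g _ hg =>
      obtain ⟨a, b, rfl⟩ := hg
      refine ⟨-a, -b, ?_⟩
      rw [mul_inv_rev, zpow_neg, zpow_neg, (hc.zpow_zpow a b).inv_inv.eq]
  apply le_antisymm
  · rintro g ⟨hg1, hg2⟩
    obtain ⟨a, b, rfl⟩ := hform g hg1
    -- ψ vanishes on closure {y, z}
    have hker : Subgroup.closure ({y, z} : Set G) ≤ ψ.ker := by
      rw [Subgroup.closure_le]
      intro w hw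
      simp only [Set.mem_insert_iff, Set.mem_singleton_iff] at hw
      rcases hw with rfl | rfl <;>
        simp [MonoidHom.mem_ker, hψdef, PresentedGroup.toGroup.of, y, z]
    have hψg : ψ (x ^ a * z ^ b) = 1 := hker hg2
    have hψx : ψ x = Multiplicative.ofAdd (1 : ZMod 2) := by
      simp [hψdef, PresentedGroup.toGroup.of, x]
    have hψz : ψ z = 1 := by simp [hψdef, PresentedGroup.toGroup.of, z]
    rw [map_mul, map_zpow, map_zpow, hψx, hψz, one_zpow, mul_one] at hψg
    have : ((a : ZMod 2)) = 0 := by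
      have := congrArg Multiplicative.toAdd hψg
      simpa [← ofAdd_zsmul] using this
    obtain ⟨k, hk⟩ := (ZMod.intCast_zmod_eq_zero_iff_dvd a 2).1 this
    have hx2 : x ^ a = (x ^ (2:ℤ)) ^ k := by
      rw [hk, ← zpow_mul]; norm_num
    clear hψg hψx hψz this hker hg2 hg1 hψdef
    have hmx : (x ^ 2 : G) ∈ ({x ^ 2, z} : Set G) := Set.mem_insert _ _
    have hmz : (z : G) ∈ ({x ^ 2, z} : Set G) := Set.mem_insert_of_mem _ rfl
    have hmem : (x ^ 2) ^ k * z ^ b ∈ Subgroup.closure ({x ^ 2, z} : Set G) :=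
      mul_mem (zpow_mem (Subgroup.subset_closure hmx) k)
        (zpow_mem (Subgroup.subset_closure hmz) b)
    rw [zpow_two] at hx2
    rw [hx2, ← pow_two]
    exact hmem
  · apply le_inf
    · rw [Subgroup.closure_le]
      intro w hw
      simp only [Set.mem_insert_iff, Set.mem_singleton_iff] at hw
      have hmx : (x : G) ∈ ({x, z} : Set G) := Set.mem_insert _ _
      have hmz : (z : G) ∈ ({x, z} : Set G) := Set.mem_insert_of_mem _ rfl
      rcases hw with rfl | rfl
      · exact pow_mem (Subgroup.subset_closure hmx) 2
      · exact Subgroup.subset_closure hmz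
    · rw [Subgroup.closure_le]
      intro w hw
      simp only [Set.mem_insert_iff, Set.mem_singleton_iff] at hw
      have hmy : (y : G) ∈ ({y, z} : Set G) := Set.mem_insert _ _
      have hmz : (z : G) ∈ ({y, z} : Set G) := Set.mem_insert_of_mem _ rfl
      rcases hw with rfl | rfl
      · have hxy : x ^ 2 = y ^ 2 := by rw [pow_two, pow_two, rel1]
        rw [hxy]
        exact pow_mem (Subgroup.subset_closure hmy) 2
      · exact Subgroup.subset_closure hmz
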